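/- Let R be an algebraic curvature tensor on ℝ⁴ satisfying the stronger identity R(a,b,Sc,Sd)=R(a,b,c,d), where S is a g-isometry with S⁴=−id and {S³x,S²x,Sx,x} is an orthonormal basis. Then for any unit vector u with φ = ∠(u,Su) and unit vector v with ∠(v,Sv) = π/3, the sectional curvatures satisfy k(u,Su) = (1+2cos²φ−3cosφ)/(1−cos²φ)·k(x,Sx) + (3cosφ)/(2(1−cos²φ))·k(v,Sv). In particular also k(x,S²x) = 2(1−cos²ψ)·k(x,Sx) for ψ=∠(x,Sx). -/

import Mathlib

set_option maxHeartbeats 10000000 in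
theorem sectional_curvature_relation_strong_invariance
    (g : (Fin 4 → ℝ) →ₗ[ℝ] (Fin 4 → ℝ) →ₗ[ℝ] ℝ)
    (hsymm : ∀ x y, g x y = g y x)
    (hpos : ∀ x, x ≠ 0 → 0 < g x x)
    (S : (Fin 4 → ℝ) →ₗ[ℝ] (Fin 4 → ℝ))
    (hS4 : ∀ x, S (S (S (S x))) = -x)
    (hiso : ∀ x y, g (S x) (S y) = g x y)
    (R : (Fin 4 → ℝ) →ₗ[ℝ] (Fin 4 → ℝ) →ₗ[ℝ] (Fin 4 → ℝ) →ₗ[ℝ] (Fin 4 → ℝ) →ₗ[ℝ] ℝ)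
    (hanti1 : ∀ a b c d, R a b c d = -R b a c d)
    (hanti2 : ∀ a b c d, R a b c d = -R a b d c)
    (hpair : ∀ a b c d, R a b c d = R c d a b)
    (hbianchi : ∀ a b c d, R a b c d + R b c a d + R c a b d = 0)
    (hinv : ∀ a b c d, R a b (S c) (S d) = R a b c d)
    (k : (Fin 4 → ℝ) → (Fin 4 → ℝ) → ℝ)
    (hk : ∀ a b, k a b = R a b a b / (g a a * g b b - (g a b) ^ 2))
    -- {S³x, S²x, Sx, x} is an orthonormal basis
    (x : Fin 4 → ℝ)
    (hxu : g x x = 1) (hxu1 : g (S x) (S x) = 1)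
    (hxu2 : g (S (S x)) (S (S x)) = 1) (hxu3 : g (S (S (S x))) (S (S (S x))) = 1)
    (ho1 : g x (S x) = 0) (ho2 : g x (S (S x)) = 0) (ho3 : g x (S (S (S x))) = 0)
    (ho4 : g (S x) (S (S x)) = 0) (ho5 : g (S x) (S (S (S x))) = 0)
    (ho6 : g (S (S x)) (S (S (S x))) = 0)
    -- u is a unit vector with cos φ = g(u, Su) for φ = ∠(u, Su)
    (u : Fin 4 → ℝ) (hu : g u u = 1) (c : ℝ) (hc : c = g u (S u))
    -- v is a unit vector with ∠(v, Sv) = π/3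
    (v : Fin 4 → ℝ) (hv : g v v = 1) (hvangle : g v (S v) = Real.cos (Real.pi / 3)) :
    k u (S u) = (1 + 2 * c ^ 2 - 3 * c) / (1 - c ^ 2) * k x (S x)
        + (3 * c) / (2 * (1 - c ^ 2)) * k v (S v) ∧
    k x (S (S x)) = 2 * (1 - (g x (S x)) ^ 2) * k x (S x) := by
  have hS3 : S (S (S (S x))) = -x := hS4 x
  have shF : ∀ a b c d, R (S a) (S b) c d = R a b c d := by
    intro a b c d; rw [hpair, hinv, hpair]
  -- canonical components
  have c0101 : R x (S x) x (S x) = R x (S x) x (S x) := rfl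
  have c0102 : R x (S x) x (S (S x)) = R x (S x) x (S (S x)) := rfl
  have c0112 : R x (S x) (S x) (S (S x)) = R x (S x) x (S x) := hinv x (S x) x (S x)
  have c0123 : R x (S x) (S (S x)) (S (S (S x))) = R x (S x) x (S x) := (hinv x (S x) (S x) (S (S x))).trans c0112
  have c0103 : R x (S x) x (S (S (S x))) = R x (S x) x (S x) := by
    have h := hinv x (S x) (S (S x)) (S (S (S x)))
    rw [hS3] at h
    simp only [map_neg, LinearMap.neg_apply] at h
    linarith [hanti2 x (S x) x (S (S (S x))), c0123]
  have c0113 : R x (S x) (S x) (S (S (S x))) = R x (S x) x (S (S x)) := hinv x (S x) x (S (S x))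
  have c0202 : R x (S (S x)) x (S (S x)) = 2 * (R x (S x) x (S x)) := by
    linarith [hinv x (S (S x)) x (S (S x)), hbianchi x (S (S x)) (S x) (S (S (S x))),
      shF (S x) x x (S (S (S x))), hanti1 x (S x) x (S (S (S x))), c0103,
      hanti1 x (S x) (S (S x)) (S (S (S x))), c0123]
  have c0213 : R x (S (S x)) (S x) (S (S (S x))) = 2 * (R x (S x) x (S x)) := by
    linarith [hinv x (S (S x)) x (S (S x)), c0202]
  have c0203 : R x (S (S x)) x (S (S (S x))) = R x (S x) x (S (S x)) := by
    have h2 := hinv x (S (S x)) (S (S (S x))) x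
    rw [hS3] at h2
    simp only [map_neg, LinearMap.neg_apply] at h2
    linarith [hpair x (S (S x)) x (S x), hanti2 x (S (S x)) x (S (S (S x)))]
  have c0212 : R x (S (S x)) (S x) (S (S x)) = R x (S x) x (S (S x)) := by
    have h := hinv x (S (S x)) x (S x)
    linarith [hpair x (S (S x)) x (S x)]
  have c0223 : R x (S (S x)) (S (S x)) (S (S (S x))) = R x (S x) x (S (S x)) := (hinv x (S (S x)) (S x) (S (S x))).trans c0212
  have c0303 : R x (S (S (S x))) x (S (S (S x))) = R x (S x) x (S x) := by
    have h := hinv x (S (S (S x))) (S (S (S x))) x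
    rw [hS3] at h
    simp only [map_neg, LinearMap.neg_apply] at h
    linarith [hpair x (S (S (S x))) x (S x), c0103, hanti2 x (S (S (S x))) x (S (S (S x)))]
  have c0312 : R x (S (S (S x))) (S x) (S (S x)) = R x (S x) x (S x) := by
    have h := hinv x (S (S (S x))) x (S x)
    linarith [hpair x (S (S (S x))) x (S x), c0103]
  have c0313 : R x (S (S (S x))) (S x) (S (S (S x))) = R x (S x) x (S (S x)) := by
    have h := hinv x (S (S (S x))) x (S (S x))
    linarith [hpair x (S (S (S x))) x (S (S x)), c0203]
  have c0323 : R x (S (S (S x))) (S (S x)) (S (S (S x))) = R x (S x) x (S x) := (hinv x (S (S (S x))) (S x) (S (S x))).trans c0312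
  have c1212 : R (S x) (S (S x)) (S x) (S (S x)) = R x (S x) x (S x) := (shF x (S x) (S x) (S (S x))).trans c0112
  have c1213 : R (S x) (S (S x)) (S x) (S (S (S x))) = R x (S x) x (S (S x)) := (shF x (S x) (S x) (S (S (S x)))).trans c0113
  have c1223 : R (S x) (S (S x)) (S (S x)) (S (S (S x))) = R x (S x) x (S x) := (shF x (S x) (S (S x)) (S (S (S x)))).trans c0123
  have c1313 : R (S x) (S (S (S x))) (S x) (S (S (S x))) = 2 * (R x (S x) x (S x)) := (shF x (S (S x)) (S x) (S (S (S x)))).trans c0213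
  have c1323 : R (S x) (S (S (S x))) (S (S x)) (S (S (S x))) = R x (S x) x (S (S x)) := (shF x (S (S x)) (S (S x)) (S (S (S x)))).trans c0223
  have c2323 : R (S (S x)) (S (S (S x))) (S (S x)) (S (S (S x))) = R x (S x) x (S x) := (shF (S x) (S (S x)) (S (S x)) (S (S (S x)))).trans c1223
  -- all 256 components
  have hR0000 : R x x x x = 0 := CharZero.eq_neg_self_iff.mp (hanti1 x x x x)
  have hR0001 : R x x x (S x) = 0 := CharZero.eq_neg_self_iff.mp (hanti1 x x x (S x))
  have hR0002 : R x x x (S (S x)) = 0 := CharZero.eq_neg_self_iff.mp (hanti1 x x x (S (S x)))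
  have hR0003 : R x x x (S (S (S x))) = 0 := CharZero.eq_neg_self_iff.mp (hanti1 x x x (S (S (S x))))
  have hR0010 : R x x (S x) x = 0 := CharZero.eq_neg_self_iff.mp (hanti1 x x (S x) x)
  have hR0011 : R x x (S x) (S x) = 0 := CharZero.eq_neg_self_iff.mp (hanti1 x x (S x) (S x))
  have hR0012 : R x x (S x) (S (S x)) = 0 := CharZero.eq_neg_self_iff.mp (hanti1 x x (S x) (S (S x)))
  have hR0013 : R x x (S x) (S (S (S x))) = 0 := CharZero.eq_neg_self_iff.mp (hanti1 x x (S x) (S (S (S x))))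
  have hR0020 : R x x (S (S x)) x = 0 := CharZero.eq_neg_self_iff.mp (hanti1 x x (S (S x)) x)
  have hR0021 : R x x (S (S x)) (S x) = 0 := CharZero.eq_neg_self_iff.mp (hanti1 x x (S (S x)) (S x))
  have hR0022 : R x x (S (S x)) (S (S x)) = 0 := CharZero.eq_neg_self_iff.mp (hanti1 x x (S (S x)) (S (S x)))
  have hR0023 : R x x (S (S x)) (S (S (S x))) = 0 := CharZero.eq_neg_self_iff.mp (hanti1 x x (S (S x)) (S (S (S x))))
  have hR0030 : R x x (S (S (S x))) x = 0 := CharZero.eq_neg_self_iff.mp (hanti1 x x (S (S (S x))) x)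
  have hR0031 : R x x (S (S (S x))) (S x) = 0 := CharZero.eq_neg_self_iff.mp (hanti1 x x (S (S (S x))) (S x))
  have hR0032 : R x x (S (S (S x))) (S (S x)) = 0 := CharZero.eq_neg_self_iff.mp (hanti1 x x (S (S (S x))) (S (S x)))
  have hR0033 : R x x (S (S (S x))) (S (S (S x))) = 0 := CharZero.eq_neg_self_iff.mp (hanti1 x x (S (S (S x))) (S (S (S x))))
  have hR0100 : R x (S x) x x = 0 := CharZero.eq_neg_self_iff.mp (hanti2 x (S x) x x)
  have hR0103 : R x (S x) x (S (S (S x))) = R x (S x) x (S x) := c0103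
  have hR0110 : R x (S x) (S x) x = -(R x (S x) x (S x)) := (hanti2 x (S x) (S x) x)
  have hR0111 : R x (S x) (S x) (S x) = 0 := CharZero.eq_neg_self_iff.mp (hanti2 x (S x) (S x) (S x))
  have hR0112 : R x (S x) (S x) (S (S x)) = R x (S x) x (S x) := c0112
  have hR0113 : R x (S x) (S x) (S (S (S x))) = R x (S x) x (S (S x)) := c0113
  have hR0120 : R x (S x) (S (S x)) x = -(R x (S x) x (S (S x))) := (hanti2 x (S x) (S (S x)) x)
  have hR0121 : R x (S x) (S (S x)) (S x) = -(R x (S x) x (S x)) := (hanti2 x (S x) (S (S x)) (S x)).trans (congrArg Neg.neg (c0112))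
  have hR0122 : R x (S x) (S (S x)) (S (S x)) = 0 := CharZero.eq_neg_self_iff.mp (hanti2 x (S x) (S (S x)) (S (S x)))
  have hR0123 : R x (S x) (S (S x)) (S (S (S x))) = R x (S x) x (S x) := c0123
  have hR0130 : R x (S x) (S (S (S x))) x = -(R x (S x) x (S x)) := (hanti2 x (S x) (S (S (S x))) x).trans (congrArg Neg.neg (c0103))
  have hR0131 : R x (S x) (S (S (S x))) (S x) = -(R x (S x) x (S (S x))) := (hanti2 x (S x) (S (S (S x))) (S x)).trans (congrArg Neg.neg (c0113))
  have hR0132 : R x (S x) (S (S (S x))) (S (S x)) = -(R x (S x) x (S x)) := (hanti2 x (S x) (S (S (S x))) (S (S x))).trans (congrArg Neg.neg (c0123))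
  have hR0133 : R x (S x) (S (S (S x))) (S (S (S x))) = 0 := CharZero.eq_neg_self_iff.mp (hanti2 x (S x) (S (S (S x))) (S (S (S x))))
  have hR0200 : R x (S (S x)) x x = 0 := CharZero.eq_neg_self_iff.mp (hanti2 x (S (S x)) x x)
  have hR0201 : R x (S (S x)) x (S x) = R x (S x) x (S (S x)) := (hpair x (S (S x)) x (S x))
  have hR0202 : R x (S (S x)) x (S (S x)) = 2 * (R x (S x) x (S x)) := c0202
  have hR0203 : R x (S (S x)) x (S (S (S x))) = R x (S x) x (S (S x)) := c0203
  have hR0210 : R x (S (S x)) (S x) x = -(R x (S x) x (S (S x))) := (hanti2 x (S (S x)) (S x) x).trans (congrArg Neg.neg ((hpair x (S (S x)) x (S x))))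
  have hR0211 : R x (S (S x)) (S x) (S x) = 0 := CharZero.eq_neg_self_iff.mp (hanti2 x (S (S x)) (S x) (S x))
  have hR0212 : R x (S (S x)) (S x) (S (S x)) = R x (S x) x (S (S x)) := c0212
  have hR0213 : R x (S (S x)) (S x) (S (S (S x))) = 2 * (R x (S x) x (S x)) := c0213
  have hR0220 : R x (S (S x)) (S (S x)) x = -(2 * (R x (S x) x (S x))) := (hanti2 x (S (S x)) (S (S x)) x).trans (congrArg Neg.neg (c0202))
  have hR0221 : R x (S (S x)) (S (S x)) (S x) = -(R x (S x) x (S (S x))) := (hanti2 x (S (S x)) (S (S x)) (S x)).trans (congrArg Neg.neg (c0212))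
  have hR0222 : R x (S (S x)) (S (S x)) (S (S x)) = 0 := CharZero.eq_neg_self_iff.mp (hanti2 x (S (S x)) (S (S x)) (S (S x)))
  have hR0223 : R x (S (S x)) (S (S x)) (S (S (S x))) = R x (S x) x (S (S x)) := c0223
  have hR0230 : R x (S (S x)) (S (S (S x))) x = -(R x (S x) x (S (S x))) := (hanti2 x (S (S x)) (S (S (S x))) x).trans (congrArg Neg.neg (c0203))
  have hR0231 : R x (S (S x)) (S (S (S x))) (S x) = -(2 * (R x (S x) x (S x))) := (hanti2 x (S (S x)) (S (S (S x))) (S x)).trans (congrArg Neg.neg (c0213))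
  have hR0232 : R x (S (S x)) (S (S (S x))) (S (S x)) = -(R x (S x) x (S (S x))) := (hanti2 x (S (S x)) (S (S (S x))) (S (S x))).trans (congrArg Neg.neg (c0223))
  have hR0233 : R x (S (S x)) (S (S (S x))) (S (S (S x))) = 0 := CharZero.eq_neg_self_iff.mp (hanti2 x (S (S x)) (S (S (S x))) (S (S (S x))))
  have hR0300 : R x (S (S (S x))) x x = 0 := CharZero.eq_neg_self_iff.mp (hanti2 x (S (S (S x))) x x)
  have hR0301 : R x (S (S (S x))) x (S x) = R x (S x) x (S x) := (hpair x (S (S (S x))) x (S x)).trans (c0103)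
  have hR0302 : R x (S (S (S x))) x (S (S x)) = R x (S x) x (S (S x)) := (hpair x (S (S (S x))) x (S (S x))).trans (c0203)
  have hR0303 : R x (S (S (S x))) x (S (S (S x))) = R x (S x) x (S x) := c0303
  have hR0310 : R x (S (S (S x))) (S x) x = -(R x (S x) x (S x)) := (hanti2 x (S (S (S x))) (S x) x).trans (congrArg Neg.neg ((hpair x (S (S (S x))) x (S x)).trans (c0103)))
  have hR0311 : R x (S (S (S x))) (S x) (S x) = 0 := CharZero.eq_neg_self_iff.mp (hanti2 x (S (S (S x))) (S x) (S x))
  have hR0312 : R x (S (S (S x))) (S x) (S (S x)) = R x (S x) x (S x) := c0312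
  have hR0313 : R x (S (S (S x))) (S x) (S (S (S x))) = R x (S x) x (S (S x)) := c0313
  have hR0320 : R x (S (S (S x))) (S (S x)) x = -(R x (S x) x (S (S x))) := (hanti2 x (S (S (S x))) (S (S x)) x).trans (congrArg Neg.neg ((hpair x (S (S (S x))) x (S (S x))).trans (c0203)))
  have hR0321 : R x (S (S (S x))) (S (S x)) (S x) = -(R x (S x) x (S x)) := (hanti2 x (S (S (S x))) (S (S x)) (S x)).trans (congrArg Neg.neg (c0312))
  have hR0322 : R x (S (S (S x))) (S (S x)) (S (S x)) = 0 := CharZero.eq_neg_self_iff.mp (hanti2 x (S (S (S x))) (S (S x)) (S (S x)))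
  have hR0323 : R x (S (S (S x))) (S (S x)) (S (S (S x))) = R x (S x) x (S x) := c0323
  have hR0330 : R x (S (S (S x))) (S (S (S x))) x = -(R x (S x) x (S x)) := (hanti2 x (S (S (S x))) (S (S (S x))) x).trans (congrArg Neg.neg (c0303))
  have hR0331 : R x (S (S (S x))) (S (S (S x))) (S x) = -(R x (S x) x (S (S x))) := (hanti2 x (S (S (S x))) (S (S (S x))) (S x)).trans (congrArg Neg.neg (c0313))
  have hR0332 : R x (S (S (S x))) (S (S (S x))) (S (S x)) = -(R x (S x) x (S x)) := (hanti2 x (S (S (S x))) (S (S (S x))) (S (S x))).trans (congrArg Neg.neg (c0323))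
  have hR0333 : R x (S (S (S x))) (S (S (S x))) (S (S (S x))) = 0 := CharZero.eq_neg_self_iff.mp (hanti2 x (S (S (S x))) (S (S (S x))) (S (S (S x))))
  have hR1000 : R (S x) x x x = 0 := CharZero.eq_neg_self_iff.mp (hanti2 (S x) x x x)
  have hR1001 : R (S x) x x (S x) = -(R x (S x) x (S x)) := (hanti1 (S x) x x (S x))
  have hR1002 : R (S x) x x (S (S x)) = -(R x (S x) x (S (S x))) := (hanti1 (S x) x x (S (S x)))
  have hR1003 : R (S x) x x (S (S (S x))) = -(R x (S x) x (S x)) := (hanti1 (S x) x x (S (S (S x)))).trans (congrArg Neg.neg (c0103))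
  have hR1010 : R (S x) x (S x) x = R x (S x) x (S x) := (hanti1 (S x) x (S x) x).trans ((congrArg Neg.neg ((hanti2 x (S x) (S x) x))).trans (neg_neg _))
  have hR1011 : R (S x) x (S x) (S x) = 0 := CharZero.eq_neg_self_iff.mp (hanti2 (S x) x (S x) (S x))
  have hR1012 : R (S x) x (S x) (S (S x)) = -(R x (S x) x (S x)) := (hanti1 (S x) x (S x) (S (S x))).trans (congrArg Neg.neg (c0112))
  have hR1013 : R (S x) x (S x) (S (S (S x))) = -(R x (S x) x (S (S x))) := (hanti1 (S x) x (S x) (S (S (S x)))).trans (congrArg Neg.neg (c0113))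
  have hR1020 : R (S x) x (S (S x)) x = R x (S x) x (S (S x)) := (hanti1 (S x) x (S (S x)) x).trans ((congrArg Neg.neg ((hanti2 x (S x) (S (S x)) x))).trans (neg_neg _))
  have hR1021 : R (S x) x (S (S x)) (S x) = R x (S x) x (S x) := (hanti1 (S x) x (S (S x)) (S x)).trans ((congrArg Neg.neg ((hanti2 x (S x) (S (S x)) (S x)).trans (congrArg Neg.neg (c0112)))).trans (neg_neg _))
  have hR1022 : R (S x) x (S (S x)) (S (S x)) = 0 := CharZero.eq_neg_self_iff.mp (hanti2 (S x) x (S (S x)) (S (S x)))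
  have hR1023 : R (S x) x (S (S x)) (S (S (S x))) = -(R x (S x) x (S x)) := (hanti1 (S x) x (S (S x)) (S (S (S x)))).trans (congrArg Neg.neg (c0123))
  have hR1030 : R (S x) x (S (S (S x))) x = R x (S x) x (S x) := (hanti1 (S x) x (S (S (S x))) x).trans ((congrArg Neg.neg ((hanti2 x (S x) (S (S (S x))) x).trans (congrArg Neg.neg (c0103)))).trans (neg_neg _))
  have hR1031 : R (S x) x (S (S (S x))) (S x) = R x (S x) x (S (S x)) := (hanti1 (S x) x (S (S (S x))) (S x)).trans ((congrArg Neg.neg ((hanti2 x (S x) (S (S (S x))) (S x)).trans (congrArg Neg.neg (c0113)))).trans (neg_neg _))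
  have hR1032 : R (S x) x (S (S (S x))) (S (S x)) = R x (S x) x (S x) := (hanti1 (S x) x (S (S (S x))) (S (S x))).trans ((congrArg Neg.neg ((hanti2 x (S x) (S (S (S x))) (S (S x))).trans (congrArg Neg.neg (c0123)))).trans (neg_neg _))
  have hR1033 : R (S x) x (S (S (S x))) (S (S (S x))) = 0 := CharZero.eq_neg_self_iff.mp (hanti2 (S x) x (S (S (S x))) (S (S (S x))))
  have hR1100 : R (S x) (S x) x x = 0 := CharZero.eq_neg_self_iff.mp (hanti1 (S x) (S x) x x)
  have hR1101 : R (S x) (S x) x (S x) = 0 := CharZero.eq_neg_self_iff.mp (hanti1 (S x) (S x) x (S x))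
  have hR1102 : R (S x) (S x) x (S (S x)) = 0 := CharZero.eq_neg_self_iff.mp (hanti1 (S x) (S x) x (S (S x)))
  have hR1103 : R (S x) (S x) x (S (S (S x))) = 0 := CharZero.eq_neg_self_iff.mp (hanti1 (S x) (S x) x (S (S (S x))))
  have hR1110 : R (S x) (S x) (S x) x = 0 := CharZero.eq_neg_self_iff.mp (hanti1 (S x) (S x) (S x) x)
  have hR1111 : R (S x) (S x) (S x) (S x) = 0 := CharZero.eq_neg_self_iff.mp (hanti1 (S x) (S x) (S x) (S x))
  have hR1112 : R (S x) (S x) (S x) (S (S x)) = 0 := CharZero.eq_neg_self_iff.mp (hanti1 (S x) (S x) (S x) (S (S x)))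
  have hR1113 : R (S x) (S x) (S x) (S (S (S x))) = 0 := CharZero.eq_neg_self_iff.mp (hanti1 (S x) (S x) (S x) (S (S (S x))))
  have hR1120 : R (S x) (S x) (S (S x)) x = 0 := CharZero.eq_neg_self_iff.mp (hanti1 (S x) (S x) (S (S x)) x)
  have hR1121 : R (S x) (S x) (S (S x)) (S x) = 0 := CharZero.eq_neg_self_iff.mp (hanti1 (S x) (S x) (S (S x)) (S x))
  have hR1122 : R (S x) (S x) (S (S x)) (S (S x)) = 0 := CharZero.eq_neg_self_iff.mp (hanti1 (S x) (S x) (S (S x)) (S (S x)))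
  have hR1123 : R (S x) (S x) (S (S x)) (S (S (S x))) = 0 := CharZero.eq_neg_self_iff.mp (hanti1 (S x) (S x) (S (S x)) (S (S (S x))))
  have hR1130 : R (S x) (S x) (S (S (S x))) x = 0 := CharZero.eq_neg_self_iff.mp (hanti1 (S x) (S x) (S (S (S x))) x)
  have hR1131 : R (S x) (S x) (S (S (S x))) (S x) = 0 := CharZero.eq_neg_self_iff.mp (hanti1 (S x) (S x) (S (S (S x))) (S x))
  have hR1132 : R (S x) (S x) (S (S (S x))) (S (S x)) = 0 := CharZero.eq_neg_self_iff.mp (hanti1 (S x) (S x) (S (S (S x))) (S (S x)))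
  have hR1133 : R (S x) (S x) (S (S (S x))) (S (S (S x))) = 0 := CharZero.eq_neg_self_iff.mp (hanti1 (S x) (S x) (S (S (S x))) (S (S (S x))))
  have hR1200 : R (S x) (S (S x)) x x = 0 := CharZero.eq_neg_self_iff.mp (hanti2 (S x) (S (S x)) x x)
  have hR1201 : R (S x) (S (S x)) x (S x) = R x (S x) x (S x) := (hpair (S x) (S (S x)) x (S x)).trans (c0112)
  have hR1202 : R (S x) (S (S x)) x (S (S x)) = R x (S x) x (S (S x)) := (hpair (S x) (S (S x)) x (S (S x))).trans (c0212)
  have hR1203 : R (S x) (S (S x)) x (S (S (S x))) = R x (S x) x (S x) := (hpair (S x) (S (S x)) x (S (S (S x)))).trans (c0312)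
  have hR1210 : R (S x) (S (S x)) (S x) x = -(R x (S x) x (S x)) := (hanti2 (S x) (S (S x)) (S x) x).trans (congrArg Neg.neg ((hpair (S x) (S (S x)) x (S x)).trans (c0112)))
  have hR1211 : R (S x) (S (S x)) (S x) (S x) = 0 := CharZero.eq_neg_self_iff.mp (hanti2 (S x) (S (S x)) (S x) (S x))
  have hR1212 : R (S x) (S (S x)) (S x) (S (S x)) = R x (S x) x (S x) := c1212
  have hR1213 : R (S x) (S (S x)) (S x) (S (S (S x))) = R x (S x) x (S (S x)) := c1213
  have hR1220 : R (S x) (S (S x)) (S (S x)) x = -(R x (S x) x (S (S x))) := (hanti2 (S x) (S (S x)) (S (S x)) x).trans (congrArg Neg.neg ((hpair (S x) (S (S x)) x (S (S x))).trans (c0212)))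
  have hR1221 : R (S x) (S (S x)) (S (S x)) (S x) = -(R x (S x) x (S x)) := (hanti2 (S x) (S (S x)) (S (S x)) (S x)).trans (congrArg Neg.neg (c1212))
  have hR1222 : R (S x) (S (S x)) (S (S x)) (S (S x)) = 0 := CharZero.eq_neg_self_iff.mp (hanti2 (S x) (S (S x)) (S (S x)) (S (S x)))
  have hR1223 : R (S x) (S (S x)) (S (S x)) (S (S (S x))) = R x (S x) x (S x) := c1223
  have hR1230 : R (S x) (S (S x)) (S (S (S x))) x = -(R x (S x) x (S x)) := (hanti2 (S x) (S (S x)) (S (S (S x))) x).trans (congrArg Neg.neg ((hpair (S x) (S (S x)) x (S (S (S x)))).trans (c0312)))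
  have hR1231 : R (S x) (S (S x)) (S (S (S x))) (S x) = -(R x (S x) x (S (S x))) := (hanti2 (S x) (S (S x)) (S (S (S x))) (S x)).trans (congrArg Neg.neg (c1213))
  have hR1232 : R (S x) (S (S x)) (S (S (S x))) (S (S x)) = -(R x (S x) x (S x)) := (hanti2 (S x) (S (S x)) (S (S (S x))) (S (S x))).trans (congrArg Neg.neg (c1223))
  have hR1233 : R (S x) (S (S x)) (S (S (S x))) (S (S (S x))) = 0 := CharZero.eq_neg_self_iff.mp (hanti2 (S x) (S (S x)) (S (S (S x))) (S (S (S x))))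
  have hR1300 : R (S x) (S (S (S x))) x x = 0 := CharZero.eq_neg_self_iff.mp (hanti2 (S x) (S (S (S x))) x x)
  have hR1301 : R (S x) (S (S (S x))) x (S x) = R x (S x) x (S (S x)) := (hpair (S x) (S (S (S x))) x (S x)).trans (c0113)
  have hR1302 : R (S x) (S (S (S x))) x (S (S x)) = 2 * (R x (S x) x (S x)) := (hpair (S x) (S (S (S x))) x (S (S x))).trans (c0213)
  have hR1303 : R (S x) (S (S (S x))) x (S (S (S x))) = R x (S x) x (S (S x)) := (hpair (S x) (S (S (S x))) x (S (S (S x)))).trans (c0313)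
  have hR1310 : R (S x) (S (S (S x))) (S x) x = -(R x (S x) x (S (S x))) := (hanti2 (S x) (S (S (S x))) (S x) x).trans (congrArg Neg.neg ((hpair (S x) (S (S (S x))) x (S x)).trans (c0113)))
  have hR1311 : R (S x) (S (S (S x))) (S x) (S x) = 0 := CharZero.eq_neg_self_iff.mp (hanti2 (S x) (S (S (S x))) (S x) (S x))
  have hR1312 : R (S x) (S (S (S x))) (S x) (S (S x)) = R x (S x) x (S (S x)) := (hpair (S x) (S (S (S x))) (S x) (S (S x))).trans (c1213)
  have hR1313 : R (S x) (S (S (S x))) (S x) (S (S (S x))) = 2 * (R x (S x) x (S x)) := c1313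
  have hR1320 : R (S x) (S (S (S x))) (S (S x)) x = -(2 * (R x (S x) x (S x))) := (hanti2 (S x) (S (S (S x))) (S (S x)) x).trans (congrArg Neg.neg ((hpair (S x) (S (S (S x))) x (S (S x))).trans (c0213)))
  have hR1321 : R (S x) (S (S (S x))) (S (S x)) (S x) = -(R x (S x) x (S (S x))) := (hanti2 (S x) (S (S (S x))) (S (S x)) (S x)).trans (congrArg Neg.neg ((hpair (S x) (S (S (S x))) (S x) (S (S x))).trans (c1213)))
  have hR1322 : R (S x) (S (S (S x))) (S (S x)) (S (S x)) = 0 := CharZero.eq_neg_self_iff.mp (hanti2 (S x) (S (S (S x))) (S (S x)) (S (S x)))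
  have hR1323 : R (S x) (S (S (S x))) (S (S x)) (S (S (S x))) = R x (S x) x (S (S x)) := c1323
  have hR1330 : R (S x) (S (S (S x))) (S (S (S x))) x = -(R x (S x) x (S (S x))) := (hanti2 (S x) (S (S (S x))) (S (S (S x))) x).trans (congrArg Neg.neg ((hpair (S x) (S (S (S x))) x (S (S (S x)))).trans (c0313)))
  have hR1331 : R (S x) (S (S (S x))) (S (S (S x))) (S x) = -(2 * (R x (S x) x (S x))) := (hanti2 (S x) (S (S (S x))) (S (S (S x))) (S x)).trans (congrArg Neg.neg (c1313))
  have hR1332 : R (S x) (S (S (S x))) (S (S (S x))) (S (S x)) = -(R x (S x) x (S (S x))) := (hanti2 (S x) (S (S (S x))) (S (S (S x))) (S (S x))).trans (congrArg Neg.neg (c1323))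
  have hR1333 : R (S x) (S (S (S x))) (S (S (S x))) (S (S (S x))) = 0 := CharZero.eq_neg_self_iff.mp (hanti2 (S x) (S (S (S x))) (S (S (S x))) (S (S (S x))))
  have hR2000 : R (S (S x)) x x x = 0 := CharZero.eq_neg_self_iff.mp (hanti2 (S (S x)) x x x)
  have hR2001 : R (S (S x)) x x (S x) = -(R x (S x) x (S (S x))) := (hanti1 (S (S x)) x x (S x)).trans (congrArg Neg.neg ((hpair x (S (S x)) x (S x))))
  have hR2002 : R (S (S x)) x x (S (S x)) = -(2 * (R x (S x) x (S x))) := (hanti1 (S (S x)) x x (S (S x))).trans (congrArg Neg.neg (c0202))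
  have hR2003 : R (S (S x)) x x (S (S (S x))) = -(R x (S x) x (S (S x))) := (hanti1 (S (S x)) x x (S (S (S x)))).trans (congrArg Neg.neg (c0203))
  have hR2010 : R (S (S x)) x (S x) x = R x (S x) x (S (S x)) := (hanti1 (S (S x)) x (S x) x).trans ((congrArg Neg.neg ((hanti2 x (S (S x)) (S x) x).trans (congrArg Neg.neg ((hpair x (S (S x)) x (S x)))))).trans (neg_neg _))
  have hR2011 : R (S (S x)) x (S x) (S x) = 0 := CharZero.eq_neg_self_iff.mp (hanti2 (S (S x)) x (S x) (S x))
  have hR2012 : R (S (S x)) x (S x) (S (S x)) = -(R x (S x) x (S (S x))) := (hanti1 (S (S x)) x (S x) (S (S x))).trans (congrArg Neg.neg (c0212))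
  have hR2013 : R (S (S x)) x (S x) (S (S (S x))) = -(2 * (R x (S x) x (S x))) := (hanti1 (S (S x)) x (S x) (S (S (S x)))).trans (congrArg Neg.neg (c0213))
  have hR2020 : R (S (S x)) x (S (S x)) x = 2 * (R x (S x) x (S x)) := (hanti1 (S (S x)) x (S (S x)) x).trans ((congrArg Neg.neg ((hanti2 x (S (S x)) (S (S x)) x).trans (congrArg Neg.neg (c0202)))).trans (neg_neg _))
  have hR2021 : R (S (S x)) x (S (S x)) (S x) = R x (S x) x (S (S x)) := (hanti1 (S (S x)) x (S (S x)) (S x)).trans ((congrArg Neg.neg ((hanti2 x (S (S x)) (S (S x)) (S x)).trans (congrArg Neg.neg (c0212)))).trans (neg_neg _))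
  have hR2022 : R (S (S x)) x (S (S x)) (S (S x)) = 0 := CharZero.eq_neg_self_iff.mp (hanti2 (S (S x)) x (S (S x)) (S (S x)))
  have hR2023 : R (S (S x)) x (S (S x)) (S (S (S x))) = -(R x (S x) x (S (S x))) := (hanti1 (S (S x)) x (S (S x)) (S (S (S x)))).trans (congrArg Neg.neg (c0223))
  have hR2030 : R (S (S x)) x (S (S (S x))) x = R x (S x) x (S (S x)) := (hanti1 (S (S x)) x (S (S (S x))) x).trans ((congrArg Neg.neg ((hanti2 x (S (S x)) (S (S (S x))) x).trans (congrArg Neg.neg (c0203)))).trans (neg_neg _))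
  have hR2031 : R (S (S x)) x (S (S (S x))) (S x) = 2 * (R x (S x) x (S x)) := (hanti1 (S (S x)) x (S (S (S x))) (S x)).trans ((congrArg Neg.neg ((hanti2 x (S (S x)) (S (S (S x))) (S x)).trans (congrArg Neg.neg (c0213)))).trans (neg_neg _))
  have hR2032 : R (S (S x)) x (S (S (S x))) (S (S x)) = R x (S x) x (S (S x)) := (hanti1 (S (S x)) x (S (S (S x))) (S (S x))).trans ((congrArg Neg.neg ((hanti2 x (S (S x)) (S (S (S x))) (S (S x))).trans (congrArg Neg.neg (c0223)))).trans (neg_neg _))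
  have hR2033 : R (S (S x)) x (S (S (S x))) (S (S (S x))) = 0 := CharZero.eq_neg_self_iff.mp (hanti2 (S (S x)) x (S (S (S x))) (S (S (S x))))
  have hR2100 : R (S (S x)) (S x) x x = 0 := CharZero.eq_neg_self_iff.mp (hanti2 (S (S x)) (S x) x x)
  have hR2101 : R (S (S x)) (S x) x (S x) = -(R x (S x) x (S x)) := (hanti1 (S (S x)) (S x) x (S x)).trans (congrArg Neg.neg ((hpair (S x) (S (S x)) x (S x)).trans (c0112)))
  have hR2102 : R (S (S x)) (S x) x (S (S x)) = -(R x (S x) x (S (S x))) := (hanti1 (S (S x)) (S x) x (S (S x))).trans (congrArg Neg.neg ((hpair (S x) (S (S x)) x (S (S x))).trans (c0212)))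
  have hR2103 : R (S (S x)) (S x) x (S (S (S x))) = -(R x (S x) x (S x)) := (hanti1 (S (S x)) (S x) x (S (S (S x)))).trans (congrArg Neg.neg ((hpair (S x) (S (S x)) x (S (S (S x)))).trans (c0312)))
  have hR2110 : R (S (S x)) (S x) (S x) x = R x (S x) x (S x) := (hanti1 (S (S x)) (S x) (S x) x).trans ((congrArg Neg.neg ((hanti2 (S x) (S (S x)) (S x) x).trans (congrArg Neg.neg ((hpair (S x) (S (S x)) x (S x)).trans (c0112))))).trans (neg_neg _))
  have hR2111 : R (S (S x)) (S x) (S x) (S x) = 0 := CharZero.eq_neg_self_iff.mp (hanti2 (S (S x)) (S x) (S x) (S x))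
  have hR2112 : R (S (S x)) (S x) (S x) (S (S x)) = -(R x (S x) x (S x)) := (hanti1 (S (S x)) (S x) (S x) (S (S x))).trans (congrArg Neg.neg (c1212))
  have hR2113 : R (S (S x)) (S x) (S x) (S (S (S x))) = -(R x (S x) x (S (S x))) := (hanti1 (S (S x)) (S x) (S x) (S (S (S x)))).trans (congrArg Neg.neg (c1213))
  have hR2120 : R (S (S x)) (S x) (S (S x)) x = R x (S x) x (S (S x)) := (hanti1 (S (S x)) (S x) (S (S x)) x).trans ((congrArg Neg.neg ((hanti2 (S x) (S (S x)) (S (S x)) x).trans (congrArg Neg.neg ((hpair (S x) (S (S x)) x (S (S x))).trans (c0212))))).trans (neg_neg _))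
  have hR2121 : R (S (S x)) (S x) (S (S x)) (S x) = R x (S x) x (S x) := (hanti1 (S (S x)) (S x) (S (S x)) (S x)).trans ((congrArg Neg.neg ((hanti2 (S x) (S (S x)) (S (S x)) (S x)).trans (congrArg Neg.neg (c1212)))).trans (neg_neg _))
  have hR2122 : R (S (S x)) (S x) (S (S x)) (S (S x)) = 0 := CharZero.eq_neg_self_iff.mp (hanti2 (S (S x)) (S x) (S (S x)) (S (S x)))
  have hR2123 : R (S (S x)) (S x) (S (S x)) (S (S (S x))) = -(R x (S x) x (S x)) := (hanti1 (S (S x)) (S x) (S (S x)) (S (S (S x)))).trans (congrArg Neg.neg (c1223))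
  have hR2130 : R (S (S x)) (S x) (S (S (S x))) x = R x (S x) x (S x) := (hanti1 (S (S x)) (S x) (S (S (S x))) x).trans ((congrArg Neg.neg ((hanti2 (S x) (S (S x)) (S (S (S x))) x).trans (congrArg Neg.neg ((hpair (S x) (S (S x)) x (S (S (S x)))).trans (c0312))))).trans (neg_neg _))
  have hR2131 : R (S (S x)) (S x) (S (S (S x))) (S x) = R x (S x) x (S (S x)) := (hanti1 (S (S x)) (S x) (S (S (S x))) (S x)).trans ((congrArg Neg.neg ((hanti2 (S x) (S (S x)) (S (S (S x))) (S x)).trans (congrArg Neg.neg (c1213)))).trans (neg_neg _))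
  have hR2132 : R (S (S x)) (S x) (S (S (S x))) (S (S x)) = R x (S x) x (S x) := (hanti1 (S (S x)) (S x) (S (S (S x))) (S (S x))).trans ((congrArg Neg.neg ((hanti2 (S x) (S (S x)) (S (S (S x))) (S (S x))).trans (congrArg Neg.neg (c1223)))).trans (neg_neg _))
  have hR2133 : R (S (S x)) (S x) (S (S (S x))) (S (S (S x))) = 0 := CharZero.eq_neg_self_iff.mp (hanti2 (S (S x)) (S x) (S (S (S x))) (S (S (S x))))
  have hR2200 : R (S (S x)) (S (S x)) x x = 0 := CharZero.eq_neg_self_iff.mp (hanti1 (S (S x)) (S (S x)) x x)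
  have hR2201 : R (S (S x)) (S (S x)) x (S x) = 0 := CharZero.eq_neg_self_iff.mp (hanti1 (S (S x)) (S (S x)) x (S x))
  have hR2202 : R (S (S x)) (S (S x)) x (S (S x)) = 0 := CharZero.eq_neg_self_iff.mp (hanti1 (S (S x)) (S (S x)) x (S (S x)))
  have hR2203 : R (S (S x)) (S (S x)) x (S (S (S x))) = 0 := CharZero.eq_neg_self_iff.mp (hanti1 (S (S x)) (S (S x)) x (S (S (S x))))
  have hR2210 : R (S (S x)) (S (S x)) (S x) x = 0 := CharZero.eq_neg_self_iff.mp (hanti1 (S (S x)) (S (S x)) (S x) x)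
  have hR2211 : R (S (S x)) (S (S x)) (S x) (S x) = 0 := CharZero.eq_neg_self_iff.mp (hanti1 (S (S x)) (S (S x)) (S x) (S x))
  have hR2212 : R (S (S x)) (S (S x)) (S x) (S (S x)) = 0 := CharZero.eq_neg_self_iff.mp (hanti1 (S (S x)) (S (S x)) (S x) (S (S x)))
  have hR2213 : R (S (S x)) (S (S x)) (S x) (S (S (S x))) = 0 := CharZero.eq_neg_self_iff.mp (hanti1 (S (S x)) (S (S x)) (S x) (S (S (S x))))
  have hR2220 : R (S (S x)) (S (S x)) (S (S x)) x = 0 := CharZero.eq_neg_self_iff.mp (hanti1 (S (S x)) (S (S x)) (S (S x)) x)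
  have hR2221 : R (S (S x)) (S (S x)) (S (S x)) (S x) = 0 := CharZero.eq_neg_self_iff.mp (hanti1 (S (S x)) (S (S x)) (S (S x)) (S x))
  have hR2222 : R (S (S x)) (S (S x)) (S (S x)) (S (S x)) = 0 := CharZero.eq_neg_self_iff.mp (hanti1 (S (S x)) (S (S x)) (S (S x)) (S (S x)))
  have hR2223 : R (S (S x)) (S (S x)) (S (S x)) (S (S (S x))) = 0 := CharZero.eq_neg_self_iff.mp (hanti1 (S (S x)) (S (S x)) (S (S x)) (S (S (S x))))
  have hR2230 : R (S (S x)) (S (S x)) (S (S (S x))) x = 0 := CharZero.eq_neg_self_iff.mp (hanti1 (S (S x)) (S (S x)) (S (S (S x))) x)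
  have hR2231 : R (S (S x)) (S (S x)) (S (S (S x))) (S x) = 0 := CharZero.eq_neg_self_iff.mp (hanti1 (S (S x)) (S (S x)) (S (S (S x))) (S x))
  have hR2232 : R (S (S x)) (S (S x)) (S (S (S x))) (S (S x)) = 0 := CharZero.eq_neg_self_iff.mp (hanti1 (S (S x)) (S (S x)) (S (S (S x))) (S (S x)))
  have hR2233 : R (S (S x)) (S (S x)) (S (S (S x))) (S (S (S x))) = 0 := CharZero.eq_neg_self_iff.mp (hanti1 (S (S x)) (S (S x)) (S (S (S x))) (S (S (S x))))
  have hR2300 : R (S (S x)) (S (S (S x))) x x = 0 := CharZero.eq_neg_self_iff.mp (hanti2 (S (S x)) (S (S (S x))) x x)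
  have hR2301 : R (S (S x)) (S (S (S x))) x (S x) = R x (S x) x (S x) := (hpair (S (S x)) (S (S (S x))) x (S x)).trans (c0123)
  have hR2302 : R (S (S x)) (S (S (S x))) x (S (S x)) = R x (S x) x (S (S x)) := (hpair (S (S x)) (S (S (S x))) x (S (S x))).trans (c0223)
  have hR2303 : R (S (S x)) (S (S (S x))) x (S (S (S x))) = R x (S x) x (S x) := (hpair (S (S x)) (S (S (S x))) x (S (S (S x)))).trans (c0323)
  have hR2310 : R (S (S x)) (S (S (S x))) (S x) x = -(R x (S x) x (S x)) := (hanti2 (S (S x)) (S (S (S x))) (S x) x).trans (congrArg Neg.neg ((hpair (S (S x)) (S (S (S x))) x (S x)).trans (c0123)))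
  have hR2311 : R (S (S x)) (S (S (S x))) (S x) (S x) = 0 := CharZero.eq_neg_self_iff.mp (hanti2 (S (S x)) (S (S (S x))) (S x) (S x))
  have hR2312 : R (S (S x)) (S (S (S x))) (S x) (S (S x)) = R x (S x) x (S x) := (hpair (S (S x)) (S (S (S x))) (S x) (S (S x))).trans (c1223)
  have hR2313 : R (S (S x)) (S (S (S x))) (S x) (S (S (S x))) = R x (S x) x (S (S x)) := (hpair (S (S x)) (S (S (S x))) (S x) (S (S (S x)))).trans (c1323)
  have hR2320 : R (S (S x)) (S (S (S x))) (S (S x)) x = -(R x (S x) x (S (S x))) := (hanti2 (S (S x)) (S (S (S x))) (S (S x)) x).trans (congrArg Neg.neg ((hpair (S (S x)) (S (S (S x))) x (S (S x))).trans (c0223)))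
  have hR2321 : R (S (S x)) (S (S (S x))) (S (S x)) (S x) = -(R x (S x) x (S x)) := (hanti2 (S (S x)) (S (S (S x))) (S (S x)) (S x)).trans (congrArg Neg.neg ((hpair (S (S x)) (S (S (S x))) (S x) (S (S x))).trans (c1223)))
  have hR2322 : R (S (S x)) (S (S (S x))) (S (S x)) (S (S x)) = 0 := CharZero.eq_neg_self_iff.mp (hanti2 (S (S x)) (S (S (S x))) (S (S x)) (S (S x)))
  have hR2323 : R (S (S x)) (S (S (S x))) (S (S x)) (S (S (S x))) = R x (S x) x (S x) := c2323
  have hR2330 : R (S (S x)) (S (S (S x))) (S (S (S x))) x = -(R x (S x) x (S x)) := (hanti2 (S (S x)) (S (S (S x))) (S (S (S x))) x).trans (congrArg Neg.neg ((hpair (S (S x)) (S (S (S x))) x (S (S (S x)))).trans (c0323)))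
  have hR2331 : R (S (S x)) (S (S (S x))) (S (S (S x))) (S x) = -(R x (S x) x (S (S x))) := (hanti2 (S (S x)) (S (S (S x))) (S (S (S x))) (S x)).trans (congrArg Neg.neg ((hpair (S (S x)) (S (S (S x))) (S x) (S (S (S x)))).trans (c1323)))
  have hR2332 : R (S (S x)) (S (S (S x))) (S (S (S x))) (S (S x)) = -(R x (S x) x (S x)) := (hanti2 (S (S x)) (S (S (S x))) (S (S (S x))) (S (S x))).trans (congrArg Neg.neg (c2323))
  have hR2333 : R (S (S x)) (S (S (S x))) (S (S (S x))) (S (S (S x))) = 0 := CharZero.eq_neg_self_iff.mp (hanti2 (S (S x)) (S (S (S x))) (S (S (S x))) (S (S (S x))))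
  have hR3000 : R (S (S (S x))) x x x = 0 := CharZero.eq_neg_self_iff.mp (hanti2 (S (S (S x))) x x x)
  have hR3001 : R (S (S (S x))) x x (S x) = -(R x (S x) x (S x)) := (hanti1 (S (S (S x))) x x (S x)).trans (congrArg Neg.neg ((hpair x (S (S (S x))) x (S x)).trans (c0103)))
  have hR3002 : R (S (S (S x))) x x (S (S x)) = -(R x (S x) x (S (S x))) := (hanti1 (S (S (S x))) x x (S (S x))).trans (congrArg Neg.neg ((hpair x (S (S (S x))) x (S (S x))).trans (c0203)))
  have hR3003 : R (S (S (S x))) x x (S (S (S x))) = -(R x (S x) x (S x)) := (hanti1 (S (S (S x))) x x (S (S (S x)))).trans (congrArg Neg.neg (c0303))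
  have hR3010 : R (S (S (S x))) x (S x) x = R x (S x) x (S x) := (hanti1 (S (S (S x))) x (S x) x).trans ((congrArg Neg.neg ((hanti2 x (S (S (S x))) (S x) x).trans (congrArg Neg.neg ((hpair x (S (S (S x))) x (S x)).trans (c0103))))).trans (neg_neg _))
  have hR3011 : R (S (S (S x))) x (S x) (S x) = 0 := CharZero.eq_neg_self_iff.mp (hanti2 (S (S (S x))) x (S x) (S x))
  have hR3012 : R (S (S (S x))) x (S x) (S (S x)) = -(R x (S x) x (S x)) := (hanti1 (S (S (S x))) x (S x) (S (S x))).trans (congrArg Neg.neg (c0312))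
  have hR3013 : R (S (S (S x))) x (S x) (S (S (S x))) = -(R x (S x) x (S (S x))) := (hanti1 (S (S (S x))) x (S x) (S (S (S x)))).trans (congrArg Neg.neg (c0313))
  have hR3020 : R (S (S (S x))) x (S (S x)) x = R x (S x) x (S (S x)) := (hanti1 (S (S (S x))) x (S (S x)) x).trans ((congrArg Neg.neg ((hanti2 x (S (S (S x))) (S (S x)) x).trans (congrArg Neg.neg ((hpair x (S (S (S x))) x (S (S x))).trans (c0203))))).trans (neg_neg _))
  have hR3021 : R (S (S (S x))) x (S (S x)) (S x) = R x (S x) x (S x) := (hanti1 (S (S (S x))) x (S (S x)) (S x)).trans ((congrArg Neg.neg ((hanti2 x (S (S (S x))) (S (S x)) (S x)).trans (congrArg Neg.neg (c0312)))).trans (neg_neg _))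
  have hR3022 : R (S (S (S x))) x (S (S x)) (S (S x)) = 0 := CharZero.eq_neg_self_iff.mp (hanti2 (S (S (S x))) x (S (S x)) (S (S x)))
  have hR3023 : R (S (S (S x))) x (S (S x)) (S (S (S x))) = -(R x (S x) x (S x)) := (hanti1 (S (S (S x))) x (S (S x)) (S (S (S x)))).trans (congrArg Neg.neg (c0323))
  have hR3030 : R (S (S (S x))) x (S (S (S x))) x = R x (S x) x (S x) := (hanti1 (S (S (S x))) x (S (S (S x))) x).trans ((congrArg Neg.neg ((hanti2 x (S (S (S x))) (S (S (S x))) x).trans (congrArg Neg.neg (c0303)))).trans (neg_neg _))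
  have hR3031 : R (S (S (S x))) x (S (S (S x))) (S x) = R x (S x) x (S (S x)) := (hanti1 (S (S (S x))) x (S (S (S x))) (S x)).trans ((congrArg Neg.neg ((hanti2 x (S (S (S x))) (S (S (S x))) (S x)).trans (congrArg Neg.neg (c0313)))).trans (neg_neg _))
  have hR3032 : R (S (S (S x))) x (S (S (S x))) (S (S x)) = R x (S x) x (S x) := (hanti1 (S (S (S x))) x (S (S (S x))) (S (S x))).trans ((congrArg Neg.neg ((hanti2 x (S (S (S x))) (S (S (S x))) (S (S x))).trans (congrArg Neg.neg (c0323)))).trans (neg_neg _))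
  have hR3033 : R (S (S (S x))) x (S (S (S x))) (S (S (S x))) = 0 := CharZero.eq_neg_self_iff.mp (hanti2 (S (S (S x))) x (S (S (S x))) (S (S (S x))))
  have hR3100 : R (S (S (S x))) (S x) x x = 0 := CharZero.eq_neg_self_iff.mp (hanti2 (S (S (S x))) (S x) x x)
  have hR3101 : R (S (S (S x))) (S x) x (S x) = -(R x (S x) x (S (S x))) := (hanti1 (S (S (S x))) (S x) x (S x)).trans (congrArg Neg.neg ((hpair (S x) (S (S (S x))) x (S x)).trans (c0113)))
  have hR3102 : R (S (S (S x))) (S x) x (S (S x)) = -(2 * (R x (S x) x (S x))) := (hanti1 (S (S (S x))) (S x) x (S (S x))).trans (congrArg Neg.neg ((hpair (S x) (S (S (S x))) x (S (S x))).trans (c0213)))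
  have hR3103 : R (S (S (S x))) (S x) x (S (S (S x))) = -(R x (S x) x (S (S x))) := (hanti1 (S (S (S x))) (S x) x (S (S (S x)))).trans (congrArg Neg.neg ((hpair (S x) (S (S (S x))) x (S (S (S x)))).trans (c0313)))
  have hR3110 : R (S (S (S x))) (S x) (S x) x = R x (S x) x (S (S x)) := (hanti1 (S (S (S x))) (S x) (S x) x).trans ((congrArg Neg.neg ((hanti2 (S x) (S (S (S x))) (S x) x).trans (congrArg Neg.neg ((hpair (S x) (S (S (S x))) x (S x)).trans (c0113))))).trans (neg_neg _))
  have hR3111 : R (S (S (S x))) (S x) (S x) (S x) = 0 := CharZero.eq_neg_self_iff.mp (hanti2 (S (S (S x))) (S x) (S x) (S x))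
  have hR3112 : R (S (S (S x))) (S x) (S x) (S (S x)) = -(R x (S x) x (S (S x))) := (hanti1 (S (S (S x))) (S x) (S x) (S (S x))).trans (congrArg Neg.neg ((hpair (S x) (S (S (S x))) (S x) (S (S x))).trans (c1213)))
  have hR3113 : R (S (S (S x))) (S x) (S x) (S (S (S x))) = -(2 * (R x (S x) x (S x))) := (hanti1 (S (S (S x))) (S x) (S x) (S (S (S x)))).trans (congrArg Neg.neg (c1313))
  have hR3120 : R (S (S (S x))) (S x) (S (S x)) x = 2 * (R x (S x) x (S x)) := (hanti1 (S (S (S x))) (S x) (S (S x)) x).trans ((congrArg Neg.neg ((hanti2 (S x) (S (S (S x))) (S (S x)) x).trans (congrArg Neg.neg ((hpair (S x) (S (S (S x))) x (S (S x))).trans (c0213))))).trans (neg_neg _))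
  have hR3121 : R (S (S (S x))) (S x) (S (S x)) (S x) = R x (S x) x (S (S x)) := (hanti1 (S (S (S x))) (S x) (S (S x)) (S x)).trans ((congrArg Neg.neg ((hanti2 (S x) (S (S (S x))) (S (S x)) (S x)).trans (congrArg Neg.neg ((hpair (S x) (S (S (S x))) (S x) (S (S x))).trans (c1213))))).trans (neg_neg _))
  have hR3122 : R (S (S (S x))) (S x) (S (S x)) (S (S x)) = 0 := CharZero.eq_neg_self_iff.mp (hanti2 (S (S (S x))) (S x) (S (S x)) (S (S x)))
  have hR3123 : R (S (S (S x))) (S x) (S (S x)) (S (S (S x))) = -(R x (S x) x (S (S x))) := (hanti1 (S (S (S x))) (S x) (S (S x)) (S (S (S x)))).trans (congrArg Neg.neg (c1323))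
  have hR3130 : R (S (S (S x))) (S x) (S (S (S x))) x = R x (S x) x (S (S x)) := (hanti1 (S (S (S x))) (S x) (S (S (S x))) x).trans ((congrArg Neg.neg ((hanti2 (S x) (S (S (S x))) (S (S (S x))) x).trans (congrArg Neg.neg ((hpair (S x) (S (S (S x))) x (S (S (S x)))).trans (c0313))))).trans (neg_neg _))
  have hR3131 : R (S (S (S x))) (S x) (S (S (S x))) (S x) = 2 * (R x (S x) x (S x)) := (hanti1 (S (S (S x))) (S x) (S (S (S x))) (S x)).trans ((congrArg Neg.neg ((hanti2 (S x) (S (S (S x))) (S (S (S x))) (S x)).trans (congrArg Neg.neg (c1313)))).trans (neg_neg _))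
  have hR3132 : R (S (S (S x))) (S x) (S (S (S x))) (S (S x)) = R x (S x) x (S (S x)) := (hanti1 (S (S (S x))) (S x) (S (S (S x))) (S (S x))).trans ((congrArg Neg.neg ((hanti2 (S x) (S (S (S x))) (S (S (S x))) (S (S x))).trans (congrArg Neg.neg (c1323)))).trans (neg_neg _))
  have hR3133 : R (S (S (S x))) (S x) (S (S (S x))) (S (S (S x))) = 0 := CharZero.eq_neg_self_iff.mp (hanti2 (S (S (S x))) (S x) (S (S (S x))) (S (S (S x))))
  have hR3200 : R (S (S (S x))) (S (S x)) x x = 0 := CharZero.eq_neg_self_iff.mp (hanti2 (S (S (S x))) (S (S x)) x x)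
  have hR3201 : R (S (S (S x))) (S (S x)) x (S x) = -(R x (S x) x (S x)) := (hanti1 (S (S (S x))) (S (S x)) x (S x)).trans (congrArg Neg.neg ((hpair (S (S x)) (S (S (S x))) x (S x)).trans (c0123)))
  have hR3202 : R (S (S (S x))) (S (S x)) x (S (S x)) = -(R x (S x) x (S (S x))) := (hanti1 (S (S (S x))) (S (S x)) x (S (S x))).trans (congrArg Neg.neg ((hpair (S (S x)) (S (S (S x))) x (S (S x))).trans (c0223)))
  have hR3203 : R (S (S (S x))) (S (S x)) x (S (S (S x))) = -(R x (S x) x (S x)) := (hanti1 (S (S (S x))) (S (S x)) x (S (S (S x)))).trans (congrArg Neg.neg ((hpair (S (S x)) (S (S (S x))) x (S (S (S x)))).trans (c0323)))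
  have hR3210 : R (S (S (S x))) (S (S x)) (S x) x = R x (S x) x (S x) := (hanti1 (S (S (S x))) (S (S x)) (S x) x).trans ((congrArg Neg.neg ((hanti2 (S (S x)) (S (S (S x))) (S x) x).trans (congrArg Neg.neg ((hpair (S (S x)) (S (S (S x))) x (S x)).trans (c0123))))).trans (neg_neg _))
  have hR3211 : R (S (S (S x))) (S (S x)) (S x) (S x) = 0 := CharZero.eq_neg_self_iff.mp (hanti2 (S (S (S x))) (S (S x)) (S x) (S x))
  have hR3212 : R (S (S (S x))) (S (S x)) (S x) (S (S x)) = -(R x (S x) x (S x)) := (hanti1 (S (S (S x))) (S (S x)) (S x) (S (S x))).trans (congrArg Neg.neg ((hpair (S (S x)) (S (S (S x))) (S x) (S (S x))).trans (c1223)))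
  have hR3213 : R (S (S (S x))) (S (S x)) (S x) (S (S (S x))) = -(R x (S x) x (S (S x))) := (hanti1 (S (S (S x))) (S (S x)) (S x) (S (S (S x)))).trans (congrArg Neg.neg ((hpair (S (S x)) (S (S (S x))) (S x) (S (S (S x)))).trans (c1323)))
  have hR3220 : R (S (S (S x))) (S (S x)) (S (S x)) x = R x (S x) x (S (S x)) := (hanti1 (S (S (S x))) (S (S x)) (S (S x)) x).trans ((congrArg Neg.neg ((hanti2 (S (S x)) (S (S (S x))) (S (S x)) x).trans (congrArg Neg.neg ((hpair (S (S x)) (S (S (S x))) x (S (S x))).trans (c0223))))).trans (neg_neg _))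
  have hR3221 : R (S (S (S x))) (S (S x)) (S (S x)) (S x) = R x (S x) x (S x) := (hanti1 (S (S (S x))) (S (S x)) (S (S x)) (S x)).trans ((congrArg Neg.neg ((hanti2 (S (S x)) (S (S (S x))) (S (S x)) (S x)).trans (congrArg Neg.neg ((hpair (S (S x)) (S (S (S x))) (S x) (S (S x))).trans (c1223))))).trans (neg_neg _))
  have hR3222 : R (S (S (S x))) (S (S x)) (S (S x)) (S (S x)) = 0 := CharZero.eq_neg_self_iff.mp (hanti2 (S (S (S x))) (S (S x)) (S (S x)) (S (S x)))
  have hR3223 : R (S (S (S x))) (S (S x)) (S (S x)) (S (S (S x))) = -(R x (S x) x (S x)) := (hanti1 (S (S (S x))) (S (S x)) (S (S x)) (S (S (S x)))).trans (congrArg Neg.neg (c2323))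
  have hR3230 : R (S (S (S x))) (S (S x)) (S (S (S x))) x = R x (S x) x (S x) := (hanti1 (S (S (S x))) (S (S x)) (S (S (S x))) x).trans ((congrArg Neg.neg ((hanti2 (S (S x)) (S (S (S x))) (S (S (S x))) x).trans (congrArg Neg.neg ((hpair (S (S x)) (S (S (S x))) x (S (S (S x)))).trans (c0323))))).trans (neg_neg _))
  have hR3231 : R (S (S (S x))) (S (S x)) (S (S (S x))) (S x) = R x (S x) x (S (S x)) := (hanti1 (S (S (S x))) (S (S x)) (S (S (S x))) (S x)).trans ((congrArg Neg.neg ((hanti2 (S (S x)) (S (S (S x))) (S (S (S x))) (S x)).trans (congrArg Neg.neg ((hpair (S (S x)) (S (S (S x))) (S x) (S (S (S x)))).trans (c1323))))).trans (neg_neg _))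
  have hR3232 : R (S (S (S x))) (S (S x)) (S (S (S x))) (S (S x)) = R x (S x) x (S x) := (hanti1 (S (S (S x))) (S (S x)) (S (S (S x))) (S (S x))).trans ((congrArg Neg.neg ((hanti2 (S (S x)) (S (S (S x))) (S (S (S x))) (S (S x))).trans (congrArg Neg.neg (c2323)))).trans (neg_neg _))
  have hR3233 : R (S (S (S x))) (S (S x)) (S (S (S x))) (S (S (S x))) = 0 := CharZero.eq_neg_self_iff.mp (hanti2 (S (S (S x))) (S (S x)) (S (S (S x))) (S (S (S x))))
  have hR3300 : R (S (S (S x))) (S (S (S x))) x x = 0 := CharZero.eq_neg_self_iff.mp (hanti1 (S (S (S x))) (S (S (S x))) x x)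
  have hR3301 : R (S (S (S x))) (S (S (S x))) x (S x) = 0 := CharZero.eq_neg_self_iff.mp (hanti1 (S (S (S x))) (S (S (S x))) x (S x))
  have hR3302 : R (S (S (S x))) (S (S (S x))) x (S (S x)) = 0 := CharZero.eq_neg_self_iff.mp (hanti1 (S (S (S x))) (S (S (S x))) x (S (S x)))
  have hR3303 : R (S (S (S x))) (S (S (S x))) x (S (S (S x))) = 0 := CharZero.eq_neg_self_iff.mp (hanti1 (S (S (S x))) (S (S (S x))) x (S (S (S x))))
  have hR3310 : R (S (S (S x))) (S (S (S x))) (S x) x = 0 := CharZero.eq_neg_self_iff.mp (hanti1 (S (S (S x))) (S (S (S x))) (S x) x)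
  have hR3311 : R (S (S (S x))) (S (S (S x))) (S x) (S x) = 0 := CharZero.eq_neg_self_iff.mp (hanti1 (S (S (S x))) (S (S (S x))) (S x) (S x))
  have hR3312 : R (S (S (S x))) (S (S (S x))) (S x) (S (S x)) = 0 := CharZero.eq_neg_self_iff.mp (hanti1 (S (S (S x))) (S (S (S x))) (S x) (S (S x)))
  have hR3313 : R (S (S (S x))) (S (S (S x))) (S x) (S (S (S x))) = 0 := CharZero.eq_neg_self_iff.mp (hanti1 (S (S (S x))) (S (S (S x))) (S x) (S (S (S x))))
  have hR3320 : R (S (S (S x))) (S (S (S x))) (S (S x)) x = 0 := CharZero.eq_neg_self_iff.mp (hanti1 (S (S (S x))) (S (S (S x))) (S (S x)) x)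
  have hR3321 : R (S (S (S x))) (S (S (S x))) (S (S x)) (S x) = 0 := CharZero.eq_neg_self_iff.mp (hanti1 (S (S (S x))) (S (S (S x))) (S (S x)) (S x))
  have hR3322 : R (S (S (S x))) (S (S (S x))) (S (S x)) (S (S x)) = 0 := CharZero.eq_neg_self_iff.mp (hanti1 (S (S (S x))) (S (S (S x))) (S (S x)) (S (S x)))
  have hR3323 : R (S (S (S x))) (S (S (S x))) (S (S x)) (S (S (S x))) = 0 := CharZero.eq_neg_self_iff.mp (hanti1 (S (S (S x))) (S (S (S x))) (S (S x)) (S (S (S x))))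
  have hR3330 : R (S (S (S x))) (S (S (S x))) (S (S (S x))) x = 0 := CharZero.eq_neg_self_iff.mp (hanti1 (S (S (S x))) (S (S (S x))) (S (S (S x))) x)
  have hR3331 : R (S (S (S x))) (S (S (S x))) (S (S (S x))) (S x) = 0 := CharZero.eq_neg_self_iff.mp (hanti1 (S (S (S x))) (S (S (S x))) (S (S (S x))) (S x))
  have hR3332 : R (S (S (S x))) (S (S (S x))) (S (S (S x))) (S (S x)) = 0 := CharZero.eq_neg_self_iff.mp (hanti1 (S (S (S x))) (S (S (S x))) (S (S (S x))) (S (S x)))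
  have hR3333 : R (S (S (S x))) (S (S (S x))) (S (S (S x))) (S (S (S x))) = 0 := CharZero.eq_neg_self_iff.mp (hanti1 (S (S (S x))) (S (S (S x))) (S (S (S x))) (S (S (S x))))
  -- g values
  have hg00 : g x x = 1 := hxu
  have hg01 : g x (S x) = 0 := ho1
  have hg02 : g x (S (S x)) = 0 := ho2
  have hg03 : g x (S (S (S x))) = 0 := ho3
  have hg10 : g (S x) x = 0 := (hsymm (S x) x).trans ho1
  have hg11 : g (S x) (S x) = 1 := hxu1
  have hg12 : g (S x) (S (S x)) = 0 := ho4
  have hg13 : g (S x) (S (S (S x))) = 0 := ho5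
  have hg20 : g (S (S x)) x = 0 := (hsymm (S (S x)) x).trans ho2
  have hg21 : g (S (S x)) (S x) = 0 := (hsymm (S (S x)) (S x)).trans ho4
  have hg22 : g (S (S x)) (S (S x)) = 1 := hxu2
  have hg23 : g (S (S x)) (S (S (S x))) = 0 := ho6
  have hg30 : g (S (S (S x))) x = 0 := (hsymm (S (S (S x))) x).trans ho3
  have hg31 : g (S (S (S x))) (S x) = 0 := (hsymm (S (S (S x))) (S x)).trans ho5
  have hg32 : g (S (S (S x))) (S (S x)) = 0 := (hsymm (S (S (S x))) (S (S x))).trans ho6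
  have hg33 : g (S (S (S x))) (S (S (S x))) = 1 := hxu3
  -- key quartic identity
  have key : ∀ c0 c1 c2 c3 : ℝ,
      R (c0 • x + c1 • (S x) + c2 • (S (S x)) + c3 • (S (S (S x)))) (c0 • (S x) + c1 • (S (S x)) + c2 • (S (S (S x))) + (-c3) • x) (c0 • x + c1 • (S x) + c2 • (S (S x)) + c3 • (S (S (S x)))) (c0 • (S x) + c1 • (S (S x)) + c2 • (S (S (S x))) + (-c3) • x)
      = (R x (S x) x (S x)) * (c0^2+c1^2+c2^2+c3^2)^2
        + 2 * (R x (S x) x (S (S x))) * (c0*c1+c1*c2+c2*c3-c3*c0) * (c0^2+c1^2+c2^2+c3^2)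
        + 2 * (R x (S x) x (S x)) * (c0*c1+c1*c2+c2*c3-c3*c0)^2 := by
    intro c0 c1 c2 c3
    simp only [map_add, map_smul, LinearMap.add_apply, LinearMap.smul_apply, smul_eq_mul,
      hR0000, hR0001, hR0002, hR0003, hR0010, hR0011, hR0012, hR0013, hR0020, hR0021, hR0022, hR0023, hR0030, hR0031, hR0032, hR0033, hR0100, hR0103, hR0110, hR0111, hR0112, hR0113, hR0120, hR0121, hR0122, hR0123, hR0130, hR0131, hR0132, hR0133, hR0200, hR0201, hR0202, hR0203, hR0210, hR0211, hR0212, hR0213, hR0220, hR0221, hR0222, hR0223, hR0230, hR0231, hR0232, hR0233, hR0300, hR0301, hR0302, hR0303, hR0310, hR0311, hR0312, hR0313, hR0320, hR0321, hR0322, hR0323, hR0330, hR0331, hR0332, hR0333, hR1000, hR1001, hR1002, hR1003, hR1010, hR1011, hR1012, hR1013, hR1020, hR1021, hR1022, hR1023, hR1030, hR1031, hR1032, hR1033, hR1100, hR1101, hR1102, hR1103, hR1110, hR1111, hR1112, hR1113, hR1120, hR1121, hR1122, hR1123, hR1130, hR1131, hR1132, hR1133, hR1200, hR1201, hR1202,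 hR1203, hR1210, hR1211, hR1212, hR1213, hR1220, hR1221, hR1222, hR1223, hR1230, hR1231, hR1232, hR1233, hR1300, hR1301, hR1302, hR1303, hR1310, hR1311, hR1312, hR1313, hR1320, hR1321, hR1322, hR1323, hR1330, hR1331, hR1332, hR1333, hR2000, hR2001, hR2002, hR2003, hR2010, hR2011, hR2012, hR2013, hR2020, hR2021, hR2022, hR2023, hR2030, hR2031, hR2032, hR2033, hR2100, hR2101, hR2102, hR2103, hR2110, hR2111, hR2112, hR2113, hR2120, hR2121, hR2122, hR2123, hR2130, hR2131, hR2132, hR2133, hR2200, hR2201, hR2202, hR2203, hR2210, hR2211, hR2212, hR2213, hR2220, hR2221, hR2222, hR2223, hR2230, hR2231, hR2232, hR2233, hR2300, hR2301, hR2302, hR2303, hR2310, hR2311, hR2312, hR2313, hR2320, hR2321, hR2322, hR2323, hR2330, hR2331, hR2332, hR2333, hR3000, hR3001, hR3002, hR3003, hR3010, hR3011, hR3012, hR3013, hR3020, hR3021, hR3022, hR3023, hR3030, hR3031, hR3032, hR3033, hR3100, hR3101, hR3102, hR3103, hR3110, hR3111, hR3112, hR3113, hR3120, hR3121, hR3122,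 hR3123, hR3130, hR3131, hR3132, hR3133, hR3200, hR3201, hR3202, hR3203, hR3210, hR3211, hR3212, hR3213, hR3220, hR3221, hR3222, hR3223, hR3230, hR3231, hR3232, hR3233, hR3300, hR3301, hR3302, hR3303, hR3310, hR3311, hR3312, hR3313, hR3320, hR3321, hR3322, hR3323, hR3330, hR3331, hR3332, hR3333]
    ring
  have gkey1 : ∀ c0 c1 c2 c3 : ℝ, g (c0 • x + c1 • (S x) + c2 • (S (S x)) + c3 • (S (S (S x)))) (c0 • x + c1 • (S x) + c2 • (S (S x)) + c3 • (S (S (S x)))) = c0^2+c1^2+c2^2+c3^2 := by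
    intro c0 c1 c2 c3
    simp only [map_add, map_smul, LinearMap.add_apply, LinearMap.smul_apply, smul_eq_mul,
      hg00, hg01, hg02, hg03, hg10, hg11, hg12, hg13, hg20, hg21, hg22, hg23, hg30, hg31, hg32, hg33]
    ring
  have gkey2 : ∀ c0 c1 c2 c3 : ℝ, g (c0 • x + c1 • (S x) + c2 • (S (S x)) + c3 • (S (S (S x)))) (c0 • (S x) + c1 • (S (S x)) + c2 • (S (S (S x))) + (-c3) • x) = c0*c1+c1*c2+c2*c3-c3*c0 := by
    intro c0 c1 c2 c3
    simp only [map_add, map_smul, LinearMap.add_apply, LinearMap.smul_apply, smul_eq_mul,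
      hg00, hg01, hg02, hg03, hg10, hg11, hg12, hg13, hg20, hg21, hg22, hg23, hg30, hg31, hg32, hg33]
    ring
  have hSu : ∀ c0 c1 c2 c3 : ℝ, S (c0 • x + c1 • (S x) + c2 • (S (S x)) + c3 • (S (S (S x)))) = (c0 • (S x) + c1 • (S (S x)) + c2 • (S (S (S x))) + (-c3) • x) := by
    intro c0 c1 c2 c3
    simp only [map_add, map_smul, hS3, smul_neg, neg_smul]
  -- basis decomposition
  have hcard : Fintype.card (Fin 4) = Module.finrank ℝ (Fin 4 → ℝ) := by
    simp [Module.finrank_fin_fun]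
  have hli : LinearIndependent ℝ ![x, S x, S (S x), S (S (S x))] := by
    rw [Fintype.linearIndependent_iff]
    intro l hl
    rw [Fin.sum_univ_four] at hl
    simp only [Matrix.cons_val_zero, Matrix.cons_val_one, Matrix.head_cons,
      Matrix.cons_val_two, Matrix.tail_cons, Matrix.cons_val_three] at hl
    have h0 := congrArg (fun z => g z x) hl
    have h1 := congrArg (fun z => g z (S x)) hl
    have h2 := congrArg (fun z => g z (S (S x))) hl
    have h3 := congrArg (fun z => g z (S (S (S x)))) hl
    simp only [map_add, map_smul, LinearMap.add_apply, LinearMap.smul_apply, smul_eq_mul,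
      map_zero, LinearMap.zero_apply, hg00, hg01, hg02, hg03, hg10, hg11, hg12, hg13, hg20, hg21, hg22, hg23, hg30, hg31, hg32, hg33, mul_one, mul_zero, add_zero, zero_add] at h0 h1 h2 h3
    intro i
    fin_cases i <;> assumption
  obtain ⟨B, hB⟩ : ∃ B : Module.Basis (Fin 4) ℝ (Fin 4 → ℝ), ⇑B = ![x, S x, S (S x), S (S (S x))] :=
    ⟨basisOfLinearIndependentOfCardEqFinrank hli hcard,
      coe_basisOfLinearIndependentOfCardEqFinrank hli hcard⟩
  have hdecomp : ∀ w : Fin 4 → ℝ,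
      w = g w x • x + g w (S x) • S x + g w (S (S x)) • S (S x) + g w (S (S (S x))) • S (S (S x)) := by
    intro w
    have hrep := B.sum_repr w
    rw [Fin.sum_univ_four] at hrep
    simp only [hB, Matrix.cons_val_zero, Matrix.cons_val_one, Matrix.head_cons,
      Matrix.cons_val_two, Matrix.tail_cons, Matrix.cons_val_three] at hrep
    have e0 := congrArg (fun z => g z x) hrep
    have e1 := congrArg (fun z => g z (S x)) hrep
    have e2 := congrArg (fun z => g z (S (S x))) hrep
    have e3 := congrArg (fun z => g z (S (S (S x)))) hrep
    simp only [map_add, map_smul, LinearMap.add_apply, LinearMap.smul_apply, smul_eq_mul,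
      hg00, hg01, hg02, hg03, hg10, hg11, hg12, hg13, hg20, hg21, hg22, hg23, hg30, hg31, hg32, hg33, mul_one, mul_zero, add_zero, zero_add] at e0 e1 e2 e3
    rw [← e0, ← e1, ← e2, ← e3]
    exact hrep.symm
  -- main formula for unit vectors
  have main : ∀ w : Fin 4 → ℝ, R w (S w) w (S w)
      = (R x (S x) x (S x)) * (g w w)^2 + 2 * (R x (S x) x (S (S x))) * (g w (S w)) * (g w w)
        + 2 * (R x (S x) x (S x)) * (g w (S w))^2 := by
    intro w
    have hw := hdecomp w
    have h1 := key (g w x) (g w (S x)) (g w (S (S x))) (g w (S (S (S x))))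
    have h2 := gkey1 (g w x) (g w (S x)) (g w (S (S x))) (g w (S (S (S x))))
    have h3 := gkey2 (g w x) (g w (S x)) (g w (S (S x))) (g w (S (S (S x))))
    rw [← hSu (g w x) (g w (S x)) (g w (S (S x))) (g w (S (S (S x)))), ← hw] at h1 h3
    rw [← hw] at h2
    rw [h1, h2, h3]
  -- values of k
  have hkx : k x (S x) = R x (S x) x (S x) := by
    rw [hk, hxu, hxu1, ho1]; norm_num
  have hkxx : k x (S (S x)) = 2 * (R x (S x) x (S x)) := by
    rw [hk, hxu, hxu2, ho2, hR0202]; norm_num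
  have hcv : g v (S v) = 1/2 := by rw [hvangle, Real.cos_pi_div_three]
  have hv2 : g (S v) (S v) = 1 := (hiso v v).trans hv
  have hRv := main v
  rw [hv, hcv] at hRv
  have hkv : k v (S v) = ((R x (S x) x (S x)) + (R x (S x) x (S (S x))) + (R x (S x) x (S x)) / 2) / (3/4) := by
    rw [hk, hv, hv2, hcv, hRv]; ring
  have hu2 : g (S u) (S u) = 1 := (hiso u u).trans hu
  have hRu := main u
  rw [hu, ← hc] at hRu
  have hku : k u (S u) = ((R x (S x) x (S x)) + 2 * (R x (S x) x (S (S x))) * c + 2 * (R x (S x) x (S x)) * c^2) / (1 - c^2) := by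
    rw [hk, hu, hu2, ← hc, hRu]; ring
  constructor
  · by_cases hden : (1:ℝ) - c^2 = 0
    · rw [hku, hden]
      norm_num
    · rw [hku, hkv, hkx]
      field_simp
      ring
  · rw [hkxx, hkx, ho1]; ring
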